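/- arXiv:2502.16496 — 2 statements merged into one kernel-verified Lean document; each statement's English description precedes it below -/
import Mathlib

section
/- Multi-agent advantage decomposition: for any permutation i_1,...,i_n of the agents, the joint advantage A^{i_{1:n}}(o, a^{i_{1:n}}) equals the sum over k = 1,...,n of the single-agent advantages A^{i_k}(o, a^{i_{1:k-1}}, a^{i_k}). -/
open Finset

/-- The multi-agent observation-action value `Q^{s}(a)`: the expectation of `Q` over the
actions of the agents outside `s` drawn from their policies, with the agents in `s`
taking the actions prescribed by `a`. (The observation `o` is fixed throughout.) -/
noncomputable def multiAgentQ {n : ℕ} {A : Fin n → Type*} [∀ i, Fintype (A i)]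
    (π : ∀ i, A i → ℝ) (Q : (∀ i, A i) → ℝ) (s : Finset (Fin n)) (a : ∀ i, A i) : ℝ :=
  ∑ b : ∀ i, A i, (∏ i ∈ sᶜ, π i (b i)) * Q (fun i => if i ∈ s then a i else b i)

/-- Multi-agent advantage decomposition: for any permutation `σ` of the agents, the joint
advantage `Q^{i_{1:n}} - V` equals the sum over `k` of the single-agent advantages
`Q^{i_{1:k}} - Q^{i_{1:k-1}}`. -/
theorem multiAgent_advantage_decomposition {n : ℕ} {A : Fin n → Type*} [∀ i, Fintype (A i)]
    (π : ∀ i, A i → ℝ) (hπ0 : ∀ i x, 0 ≤ π i x) (hπ1 : ∀ i, ∑ x : A i, π i x = 1)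
    (Q : (∀ i, A i) → ℝ) (σ : Equiv.Perm (Fin n)) (a : ∀ i, A i) :
    multiAgentQ π Q Finset.univ a - multiAgentQ π Q ∅ a =
      ∑ k : Fin n,
        (multiAgentQ π Q ((Finset.Iic k).image σ) a -
          multiAgentQ π Q ((Finset.Iio k).image σ) a) := by
  set f : ℕ → ℝ := fun m =>
    multiAgentQ π Q ((Finset.univ.filter (fun j : Fin n => (j : ℕ) < m)).image σ) a with hf
  have hfin : (Finset.univ.filter (fun j : Fin n => (j : ℕ) < n)) = Finset.univ := by
    ext j; simp [j.isLt]
  have himg : (Finset.univ : Finset (Fin n)).image σ = Finset.univ := by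
    apply Finset.eq_univ_iff_forall.2
    intro x
    exact Finset.mem_image.2 ⟨σ⁻¹ x, Finset.mem_univ _, by simp⟩
  have h0 : (Finset.univ.filter (fun j : Fin n => (j : ℕ) < 0)) = ∅ := by
    ext j; simp
  have key : ∀ k : Fin n,
      (Finset.Iic k = Finset.univ.filter (fun j : Fin n => (j : ℕ) < k + 1)) ∧
      (Finset.Iio k = Finset.univ.filter (fun j : Fin n => (j : ℕ) < k)) := by
    intro k
    constructor <;> ext j <;>
      simp only [Finset.mem_Iic, Finset.mem_Iio, Finset.mem_filter, Finset.mem_univ,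
        true_and, Fin.le_iff_val_le_val, Fin.lt_iff_val_lt_val, Nat.lt_succ_iff]
  calc multiAgentQ π Q Finset.univ a - multiAgentQ π Q ∅ a
      = f n - f 0 := by rw [hf]; simp [hfin, himg, h0]
    _ = ∑ m ∈ Finset.range n, (f (m + 1) - f m) := (Finset.sum_range_sub f n).symm
    _ = ∑ k : Fin n, (f ((k : ℕ) + 1) - f (k : ℕ)) :=
        (Fin.sum_univ_eq_sum_range (fun m => f (m + 1) - f m) n).symm
    _ = _ := by
        refine Finset.sum_congr rfl fun k _ => ?_
        rw [(key k).1, (key k).2]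
end

section
/- The Plackett-Luce probability of the identity permutation on scores sorted in decreasing order is maximal among all permutations: if v_1 ≥ v_2 ≥ ... ≥ v_n > 0, then P(id | v) ≥ P(σ | v) for every permutation σ. -/
/-- The Plackett-Luce probability of a permutation `σ` of `n` items with scores `v`. -/
noncomputable def plackettLuce {n : ℕ} (v : Fin n → ℝ) (σ : Equiv.Perm (Fin n)) : ℝ :=
  ∏ i : Fin n, v (σ i) / ∑ j ∈ Finset.Ici i, v (σ j)

lemma sum_Ici_le_sum_of_card {n : ℕ} (v : Fin n → ℝ)
    (hsorted : ∀ i j : Fin n, i ≤ j → v j ≤ v i) (i : Fin n) (S : Finset (Fin n))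
    (hcard : S.card = (Finset.Ici i).card) :
    ∑ j ∈ Finset.Ici i, v j ≤ ∑ j ∈ S, v j := by
  set T := Finset.Ici i with hT
  have hd : (T \ S).card = (S \ T).card := Finset.card_sdiff_comm hcard.symm
  have h1 : ∑ j ∈ T \ S, v j ≤ (T \ S).card • v i :=
    Finset.sum_le_card_nsmul _ _ _ (fun x hx =>
      hsorted i x (Finset.mem_Ici.mp (Finset.mem_sdiff.mp hx).1))
  have h2 : (S \ T).card • v i ≤ ∑ j ∈ S \ T, v j :=
    Finset.card_nsmul_le_sum _ _ _ (fun x hx => by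
      have hx2 := (Finset.mem_sdiff.mp hx).2
      have : x < i := by simpa [hT, Finset.mem_Ici, not_le] using hx2
      exact hsorted x i this.le)
  have hkey : ∑ j ∈ T \ S, v j ≤ ∑ j ∈ S \ T, v j := by
    calc ∑ j ∈ T \ S, v j ≤ (T \ S).card • v i := h1
      _ = (S \ T).card • v i := by rw [hd]
      _ ≤ ∑ j ∈ S \ T, v j := h2
  have e1 : ∑ j ∈ T ∩ S, v j + ∑ j ∈ T \ S, v j = ∑ j ∈ T, v j :=
    Finset.sum_inter_add_sum_sdiff T S v
  have e2 : ∑ j ∈ S ∩ T, v j + ∑ j ∈ S \ T, v j = ∑ j ∈ S, v j :=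
    Finset.sum_inter_add_sum_sdiff S T v
  have e3 : T ∩ S = S ∩ T := Finset.inter_comm T S
  linarith [hkey, e1, e2, e3 ▸ e1]

/-- If the scores are sorted in decreasing order, the identity permutation is a mode of the
Plackett-Luce distribution: its probability is at least that of every other permutation. -/
theorem plackettLuce_sorted_identity_is_mode {n : ℕ} (v : Fin n → ℝ) (hv : ∀ i, 0 < v i)
    (hsorted : ∀ i j : Fin n, i ≤ j → v j ≤ v i) (σ : Equiv.Perm (Fin n)) :
    plackettLuce v σ ≤ plackettLuce v (Equiv.refl (Fin n)) := by
  unfold plackettLuce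
  rw [Finset.prod_div_distrib, Finset.prod_div_distrib]
  simp only [Equiv.refl_apply]
  rw [Equiv.prod_comp σ v]
  have hpos : ∀ i : Fin n, 0 < ∑ j ∈ Finset.Ici i, v j :=
    fun i => Finset.sum_pos (fun j _ => hv j) ⟨i, Finset.mem_Ici.mpr le_rfl⟩
  have hnum : 0 ≤ ∏ i : Fin n, v i := Finset.prod_nonneg (fun i _ => (hv i).le)
  have hden1 : 0 < ∏ i : Fin n, ∑ j ∈ Finset.Ici i, v j :=
    Finset.prod_pos (fun i _ => hpos i)
  have hle : ∏ i : Fin n, ∑ j ∈ Finset.Ici i, v j ≤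
      ∏ i : Fin n, ∑ j ∈ Finset.Ici i, v (σ j) := by
    apply Finset.prod_le_prod (fun i _ => (hpos i).le)
    intro i _
    have himg : ∑ j ∈ Finset.Ici i, v (σ j) = ∑ j ∈ (Finset.Ici i).image σ, v j :=
      (Finset.sum_image (fun x _ y _ h => σ.injective h)).symm
    rw [himg]
    exact sum_Ici_le_sum_of_card v hsorted i _
      (Finset.card_image_of_injective _ σ.injective)
  exact div_le_div_of_nonneg_left hnum hden1 hle |>.trans_eq rfl |>.trans_eq rfl
end
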